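/- Let 0 < κ < 1 + √2 and define δ₀ = (1+2κ)/(1+κ), δ₁ = −(1+κ), δ₂ = κ²/(1+κ). Let η be a real number with 0 ≤ η < 1 and η > (3κ² − 2κ − 1)/(κ+1)². Then for every complex number s with |s| < 1, Re( (δ₀ + δ₁ s + δ₂ s²)/(1 − η s) ) > 0. -/

import Mathlib

set_option maxHeartbeats 1000000 in
theorem bdf2_multiplier_condition (κ : ℝ) (hκ0 : 0 < κ) (hκ : κ < 1 + Real.sqrt 2)
    (η : ℝ) (hη0 : 0 ≤ η) (hη1 : η < 1)
    (hη : η > (3 * κ ^ 2 - 2 * κ - 1) / (κ + 1) ^ 2) :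
    ∀ s : ℂ, ‖s‖ < 1 →
      (((((1 + 2 * κ) / (1 + κ) : ℝ) : ℂ) + ((-(1 + κ) : ℝ) : ℂ) * s
          + ((κ ^ 2 / (1 + κ) : ℝ) : ℂ) * s ^ 2) / (1 - (η : ℂ) * s)).re > 0 := by
  intro s hs
  set x := s.re with hxdef
  set y := s.im with hydef
  have hk1 : (0:ℝ) < 1 + κ := by linarith
  have hk1' : (0:ℝ) < (κ + 1) ^ 2 := by positivity
  have hη' : η * (κ + 1) ^ 2 > 3 * κ ^ 2 - 2 * κ - 1 := by
    have := (div_lt_iff₀ hk1').mp hη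
    linarith
  have sq2 : Real.sqrt 2 ^ 2 = 2 := Real.sq_sqrt (by norm_num)
  have hs2 : (1:ℝ) < Real.sqrt 2 := by nlinarith [Real.sqrt_nonneg 2]
  have hk2 : κ ^ 2 - 2 * κ - 1 < 0 := by
    nlinarith [mul_pos (show (0:ℝ) < 1 + Real.sqrt 2 - κ by linarith)
      (show (0:ℝ) < κ - 1 + Real.sqrt 2 by linarith)]
  have ht : x ^ 2 + y ^ 2 < 1 := by
    have h1 : ‖s‖ ^ 2 < 1 := by nlinarith [norm_nonneg s]
    have h2 : ‖s‖ ^ 2 = x ^ 2 + y ^ 2 := by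
      rw [Complex.sq_norm, Complex.normSq_apply]; ring
    linarith [h2 ▸ h1]
  have hx2 : x ^ 2 < 1 := by nlinarith [sq_nonneg y]
  have hx1 : x < 1 := by nlinarith
  have hxm : -1 < x := by nlinarith
  have h1ex : η * x < 1 := by
    rcases le_or_gt x 0 with h | h
    · nlinarith
    · nlinarith
  -- positivity of the two key factors
  have hP1 : 0 < (1 - η * x) * ((1 - x) * (1 + 2 * κ - κ ^ 2 * x)) := by
    have h3 : 0 < 1 + 2 * κ - κ ^ 2 * x := by
      rcases le_or_gt x 0 with h | h
      · nlinarith [mul_nonneg (sq_nonneg κ) (neg_nonneg.mpr h)]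
      · nlinarith [mul_lt_mul_of_pos_left hx1 (show (0:ℝ) < κ ^ 2 by positivity)]
    have := mul_pos (show (0:ℝ) < 1 - x by linarith) h3
    exact mul_pos (by linarith) this
  have hP2 : 0 < (1 - x) * (1 + 2 * κ - κ ^ 2 + η * (κ + 1) ^ 2 - 2 * κ ^ 2 * x) := by
    have h3 : 0 < 1 + 2 * κ - κ ^ 2 + η * (κ + 1) ^ 2 - 2 * κ ^ 2 * x := by
      nlinarith [mul_lt_mul_of_pos_left hx1 (show (0:ℝ) < 2 * κ ^ 2 by positivity)]
    exact mul_pos (by linarith) h3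
  -- the cleared real inequality
  have key : 0 < (1 + 2 * κ) - (1 + κ) ^ 2 * x + κ ^ 2 * (x ^ 2 - y ^ 2)
      - η * (1 + 2 * κ) * x + η * (1 + κ) ^ 2 * (x ^ 2 + y ^ 2)
      - η * κ ^ 2 * x * (x ^ 2 + y ^ 2) := by
    set g : ℝ := (1 + 2 * κ) - (1 + κ) ^ 2 * x + κ ^ 2 * (x ^ 2 - y ^ 2)
      - η * (1 + 2 * κ) * x + η * (1 + κ) ^ 2 * (x ^ 2 + y ^ 2)
      - η * κ ^ 2 * x * (x ^ 2 + y ^ 2) with hg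
    have hA := mul_pos (show (0:ℝ) < 1 - (x ^ 2 + y ^ 2) by linarith) hP1
    have hB := mul_nonneg (sq_nonneg y) hP2.le
    have hid : g * (1 - x ^ 2)
        = (1 - (x ^ 2 + y ^ 2)) * ((1 - η * x) * ((1 - x) * (1 + 2 * κ - κ ^ 2 * x)))
          + y ^ 2 * ((1 - x) * (1 + 2 * κ - κ ^ 2 + η * (κ + 1) ^ 2 - 2 * κ ^ 2 * x)) := by
      rw [hg]; ring
    have hpos : 0 < g * (1 - x ^ 2) := by rw [hid]; linarith
    rcases mul_pos_iff.mp hpos with ⟨h, _⟩ | ⟨_, h2⟩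
    · exact h
    · linarith
  -- back to the complex statement
  have hD : (0:ℝ) < (1 - η * x) ^ 2 + (η * y) ^ 2 := by
    have := pow_pos (show (0:ℝ) < 1 - η * x by linarith) 2
    nlinarith [sq_nonneg (η * y)]
  rw [Complex.div_re]
  have hre : ((((1 + 2 * κ) / (1 + κ) : ℝ) : ℂ) + ((-(1 + κ) : ℝ) : ℂ) * s
        + ((κ ^ 2 / (1 + κ) : ℝ) : ℂ) * s ^ 2).re
      = (1 + 2 * κ) / (1 + κ) + (-(1 + κ)) * x + κ ^ 2 / (1 + κ) * (x ^ 2 - y ^ 2) := by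
    simp only [Complex.add_re, Complex.mul_re, Complex.ofReal_re, Complex.ofReal_im, pow_two,
      Complex.mul_im, ← hxdef, ← hydef]
    ring
  have him : ((((1 + 2 * κ) / (1 + κ) : ℝ) : ℂ) + ((-(1 + κ) : ℝ) : ℂ) * s
        + ((κ ^ 2 / (1 + κ) : ℝ) : ℂ) * s ^ 2).im
      = (-(1 + κ)) * y + κ ^ 2 / (1 + κ) * (2 * x * y) := by
    simp only [Complex.add_im, Complex.mul_re, Complex.ofReal_re, Complex.ofReal_im, pow_two,
      Complex.mul_im, ← hxdef, ← hydef]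
    ring
  have hdre : ((1:ℂ) - (η : ℂ) * s).re = 1 - η * x := by
    simp only [Complex.sub_re, Complex.mul_re, Complex.one_re, Complex.ofReal_re, Complex.ofReal_im, Complex.one_im, ← hxdef, ← hydef]; ring
  have hdim : ((1:ℂ) - (η : ℂ) * s).im = -(η * y) := by
    simp only [Complex.sub_im, Complex.mul_im, Complex.one_im, Complex.ofReal_re, Complex.ofReal_im, ← hxdef, ← hydef]; ring
  have hnsq : Complex.normSq ((1:ℂ) - (η : ℂ) * s) = (1 - η * x) ^ 2 + (η * y) ^ 2 := by
    rw [Complex.normSq_apply, hdre, hdim]; ring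
  rw [hre, him, hdre, hdim, hnsq, ← add_div]
  apply div_pos _ hD
  have hnum : ((1 + 2 * κ) / (1 + κ) + (-(1 + κ)) * x + κ ^ 2 / (1 + κ) * (x ^ 2 - y ^ 2))
        * (1 - η * x)
      + ((-(1 + κ)) * y + κ ^ 2 / (1 + κ) * (2 * x * y)) * (-(η * y))
      = ((1 + 2 * κ) - (1 + κ) ^ 2 * x + κ ^ 2 * (x ^ 2 - y ^ 2)
          - η * (1 + 2 * κ) * x + η * (1 + κ) ^ 2 * (x ^ 2 + y ^ 2)
          - η * κ ^ 2 * x * (x ^ 2 + y ^ 2)) / (1 + κ) := by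
    field_simp
    ring
  rw [hnum]
  exact div_pos key hk1
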